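/- Let φ₂ : U(2) → U(3) be the two-photon homomorphism given by φ₂(S) = [[S₁₁², S₁₂², √2 S₁₁S₁₂], [S₂₁², S₂₂², √2 S₂₁S₂₂], [√2 S₁₁S₂₁, √2 S₁₂S₂₂, S₁₁S₂₂ + S₁₂S₂₁]]. Then for any 2×2 Hermitian matrix H, the derivative at t = 0 of t ↦ φ₂(e^{iHt}) equals i·H_U, where H_U = [[2H₁₁, 0, √2 H₁₂], [0, 2H₂₂, √2 H₂₁], [√2 H₂₁, √2 H₁₂, H₁₁ + H₂₂]]. -/

import Mathlib

open Matrix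

attribute [local instance] Matrix.linftyOpNormedRing Matrix.linftyOpNormedAlgebra

noncomputable def rt2 : ℂ := (Real.sqrt 2 : ℝ)

/-- The two-photon map `φ₂` sending a `2 × 2` matrix `S` to the `3 × 3` matrix
acting on the two-photon basis `|20⟩, |02⟩, |11⟩`. -/
noncomputable def phi2 (S : Matrix (Fin 2) (Fin 2) ℂ) : Matrix (Fin 3) (Fin 3) ℂ :=
  !![S 0 0 ^ 2, S 0 1 ^ 2, rt2 * S 0 0 * S 0 1;
     S 1 0 ^ 2, S 1 1 ^ 2, rt2 * S 1 0 * S 1 1;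
     rt2 * S 0 0 * S 1 0, rt2 * S 0 1 * S 1 1, S 0 0 * S 1 1 + S 0 1 * S 1 0]


/-- The two-photon Hamiltonian `H_U` associated to a one-photon Hamiltonian `H`. -/
noncomputable def HU (H : Matrix (Fin 2) (Fin 2) ℂ) : Matrix (Fin 3) (Fin 3) ℂ :=
  !![2 * H 0 0, 0, rt2 * H 0 1;
     0, 2 * H 1 1, rt2 * H 1 0;
     rt2 * H 1 0, rt2 * H 0 1, H 0 0 + H 1 1]

lemma entry_norm_le {n : Type*} [Fintype n] [DecidableEq n] (M : Matrix n n ℂ) (i j : n) :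
    ‖M i j‖ ≤ ‖M‖ := by
  have h1 : ‖M i j‖₊ ≤ ‖M‖₊ := by
    rw [Matrix.linfty_opNNNorm_def]
    exact le_trans
      (Finset.single_le_sum (f := fun j => ‖M i j‖₊) (fun k _ => zero_le) (Finset.mem_univ j))
      (Finset.le_sup (f := fun i => ∑ j, ‖M i j‖₊) (Finset.mem_univ i))
  exact_mod_cast h1

lemma norm_le_sum_entries {n : Type*} [Fintype n] [DecidableEq n] (M : Matrix n n ℂ) :
    ‖M‖ ≤ ∑ i, ∑ j, ‖M i j‖ := by
  have h1 : ‖M‖₊ ≤ ∑ i, ∑ j, ‖M i j‖₊ := by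
    rw [Matrix.linfty_opNNNorm_def]
    exact Finset.sup_le fun i _ =>
      Finset.single_le_sum (f := fun i => ∑ j, ‖M i j‖₊) (fun k _ => zero_le)
        (Finset.mem_univ i)
  have := (NNReal.coe_le_coe).2 h1
  simpa [NNReal.coe_sum] using this

lemma hasDerivAt_entry {n : Type*} [Fintype n] [DecidableEq n]
    {f : ℝ → Matrix n n ℂ} {f' : Matrix n n ℂ} {t : ℝ}
    (h : HasDerivAt f f' t) (i j : n) :
    HasDerivAt (fun s => f s i j) (f' i j) t := by
  let L : Matrix n n ℂ →L[ℝ] ℂ :=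
    LinearMap.mkContinuous
      { toFun := fun M => M i j, map_add' := fun _ _ => rfl, map_smul' := fun _ _ => rfl } 1
      (fun M => le_of_le_of_eq (entry_norm_le M i j) (one_mul _).symm)
  exact L.hasFDerivAt.comp_hasDerivAt t h

lemma hasDerivAt_of_entries {n : Type*} [Fintype n] [DecidableEq n]
    {f : ℝ → Matrix n n ℂ} {f' : Matrix n n ℂ} {t : ℝ}
    (h : ∀ i j, HasDerivAt (fun s => f s i j) (f' i j) t) :
    HasDerivAt f f' t := by
  refine hasDerivAt_iff_isLittleO.mpr ?_
  have key : ∀ i j, (fun s => ‖f s i j - f t i j - (s - t) • f' i j‖)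
      =o[nhds t] fun s => s - t :=
    fun i j => (hasDerivAt_iff_isLittleO.mp (h i j)).norm_left
  have hsum : (fun s => ∑ i : n, ∑ j : n, ‖f s i j - f t i j - (s - t) • f' i j‖)
      =o[nhds t] fun s => s - t := by
    apply Asymptotics.IsLittleO.fun_sum; intro i _
    apply Asymptotics.IsLittleO.fun_sum; intro j _
    exact key i j
  refine Asymptotics.IsBigO.trans_isLittleO ?_ hsum
  rw [Asymptotics.isBigO_iff]
  refine ⟨1, Filter.Eventually.of_forall fun s => ?_⟩
  rw [one_mul]
  have hnn : (0:ℝ) ≤ ∑ i : n, ∑ j : n, ‖f s i j - f t i j - (s - t) • f' i j‖ := by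
    positivity
  rw [Real.norm_of_nonneg hnn]
  have := norm_le_sum_entries (f s - f t - (s - t) • f')
  simpa [Matrix.sub_apply, Matrix.smul_apply] using this

/-- The derivative at `t = 0` of `t ↦ φ₂(e^{iHt})` is `i • H_U`, for any
`2 × 2` Hermitian matrix `H`. -/
theorem phi2_hasDerivAt (H : Matrix (Fin 2) (Fin 2) ℂ) (hH : H.IsHermitian) :
    HasDerivAt (fun t : ℝ => phi2 (NormedSpace.exp ((t : ℂ) • Complex.I • H)))
      (Complex.I • HU H) 0 := by
  set A : Matrix (Fin 2) (Fin 2) ℂ := Complex.I • H with hA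
  have hexp : HasDerivAt (fun t : ℝ => NormedSpace.exp ((t : ℂ) • A)) A 0 := by
    have h0 := hasDerivAt_exp_smul_const (𝕂 := ℂ) A (((0 : ℝ) : ℂ))
    have h1 := HasDerivAt.scomp (0 : ℝ) h0 Complex.ofRealCLM.hasDerivAt
    rw [Function.comp_def] at h1; simp at h1; exact h1
  have hu : ∀ i j, HasDerivAt (fun t : ℝ => NormedSpace.exp ((t : ℂ) • A) i j) (A i j) 0 :=
    fun i j => hasDerivAt_entry hexp i j
  have hu0 : ∀ i j, NormedSpace.exp (((0:ℝ) : ℂ) • A) i j = (1 : Matrix (Fin 2) (Fin 2) ℂ) i j := by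
    intro i j; simp
  apply hasDerivAt_of_entries
  intro i j
  fin_cases i <;> fin_cases j <;>
    simp only [phi2, HU, Matrix.smul_apply, Matrix.cons_val', Matrix.cons_val_zero,
      Matrix.cons_val_one, Matrix.head_cons, Matrix.empty_val', Matrix.cons_val_fin_one,
      Matrix.head_fin_const, Matrix.of_apply, Matrix.cons_val_two, Matrix.tail_cons,
      Fin.isValue, smul_eq_mul, Fin.mk_zero, Fin.mk_one, pow_two, Fin.reduceFinMk]
  · -- (0,0) : U00^2, deriv 2 A00
    convert (hu 0 0).fun_mul (hu 0 0) using 1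
    rfl
    simp [hu0 0 0, Matrix.one_apply, hA, Matrix.smul_apply]; ring
  · convert (hu 0 1).fun_mul (hu 0 1) using 1
    rfl
    simp [hu0 0 1, Matrix.one_apply, hA, Matrix.smul_apply]
  · convert (((hu 0 0).const_mul rt2).fun_mul (hu 0 1)) using 1
    rfl
    simp [hu0 0 0, hu0 0 1, Matrix.one_apply, hA, Matrix.smul_apply]; ring
  · convert (hu 1 0).fun_mul (hu 1 0) using 1
    rfl
    simp [hu0 1 0, Matrix.one_apply, hA, Matrix.smul_apply]
  · convert (hu 1 1).fun_mul (hu 1 1) using 1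
    rfl
    simp [hu0 1 1, Matrix.one_apply, hA, Matrix.smul_apply]; ring
  · convert (((hu 1 0).const_mul rt2).fun_mul (hu 1 1)) using 1
    rfl
    simp [hu0 1 0, hu0 1 1, Matrix.one_apply, hA, Matrix.smul_apply]; ring
  · convert (((hu 0 0).const_mul rt2).fun_mul (hu 1 0)) using 1
    rfl
    simp [hu0 0 0, hu0 1 0, Matrix.one_apply, hA, Matrix.smul_apply]; ring
  · convert (((hu 0 1).const_mul rt2).fun_mul (hu 1 1)) using 1
    rfl
    simp [hu0 0 1, hu0 1 1, Matrix.one_apply, hA, Matrix.smul_apply]; ring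
  · convert ((hu 0 0).fun_mul (hu 1 1)).fun_add ((hu 0 1).fun_mul (hu 1 0)) using 1
    rfl
    simp [hu0 0 0, hu0 1 1, hu0 0 1, hu0 1 0, Matrix.one_apply, hA, Matrix.smul_apply]; ring
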